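/- Let (X,d) be a metric space, γ a Borel measure on X with 0 < γ(B) < ∞ for every ball B, and m : X → (0,∞) an admissibility function satisfying condition (C): for every α > 0 there exists c_α ≥ 1 such that d(x,y) ≤ α·m(x) implies m(x) ≤ c_α·m(y). Let β ≥ 1, set α := 2β·c_{2β}, and suppose A_β ≥ 1 is a constant such that γ(B(z,4t)) ≤ A_β·γ(B(z,t/4)) for all z ∈ X and all t > 0 with t ≤ β·c_β·m(z). Let 0 < λ < 1/A_β. Suppose ρ : [0,∞) → X satisfies d(ρ(s),ρ(u)) = |s−u| for all s,u ≥ 0 (a unit-speed geodesic ray), E ⊆ X is open, 0 < t ≤ β·m(ρ(0)), the sector R := ∪_{0 ≤ s ≤ t} B(ρ(s), s/4) satisfies R ⊆ E, and y ∈ R. Then every point of B(y,2t) lies in E*_{α,λ} := {x ∈ X : there is an α-admissible ball B with x ∈ B and γ(B ∩ E)/γ(B) > λ}; in fact B(y,2t) is itself an α-admissible ball with γ(B(y,2t) ∩ E)/γ(B(y,2t)) > λ. -/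

import Mathlib

open MeasureTheory Metric ENNReal

theorem stmt19 {X : Type*} [MetricSpace X] [MeasurableSpace X] [BorelSpace X]
    (γ : Measure X)
    (hγ : ∀ (c : X) (r : ℝ), 0 < r → 0 < γ (ball c r) ∧ γ (ball c r) < ⊤)
    (m : X → ℝ) (hm : ∀ x, 0 < m x)
    (cst : ℝ → ℝ) (hcst1 : ∀ a : ℝ, 0 < a → 1 ≤ cst a)
    (hC : ∀ a : ℝ, 0 < a → ∀ x y : X, dist x y ≤ a * m x → m x ≤ cst a * m y)
    (β : ℝ) (hβ : 1 ≤ β)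
    (Aβ : ℝ) (hAβ1 : 1 ≤ Aβ)
    (hAβ : ∀ (z : X) (t : ℝ), 0 < t → t ≤ β * cst β * m z →
      γ (ball z (4 * t)) ≤ ENNReal.ofReal Aβ * γ (ball z (t / 4)))
    (lam : ℝ) (hlam0 : 0 < lam) (hlam : lam < 1 / Aβ)
    (ρ : ℝ → X) (hρ : ∀ s u : ℝ, 0 ≤ s → 0 ≤ u → dist (ρ s) (ρ u) = |s - u|)
    (E : Set X) (hE : IsOpen E)
    (t : ℝ) (ht : 0 < t) (htβ : t ≤ β * m (ρ 0))
    (hRE : (⋃ s ∈ Set.Icc (0 : ℝ) t, ball (ρ s) (s / 4)) ⊆ E)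
    (y : X) (hy : y ∈ ⋃ s ∈ Set.Icc (0 : ℝ) t, ball (ρ s) (s / 4)) :
    ball y (2 * t) ⊆
        {x : X | ∃ (c : X) (r : ℝ), 0 < r ∧ r ≤ (2 * β * cst (2 * β)) * m c ∧
          x ∈ ball c r ∧ ENNReal.ofReal lam * γ (ball c r) < γ (ball c r ∩ E)} ∧
      2 * t ≤ (2 * β * cst (2 * β)) * m y ∧
      ENNReal.ofReal lam * γ (ball y (2 * t)) < γ (ball y (2 * t) ∩ E) := by
  have hβ0 : (0:ℝ) < β := lt_of_lt_of_le one_pos hβ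
  have hm0 : 0 < m (ρ 0) := hm (ρ 0)
  simp only [Set.mem_iUnion, Set.mem_Icc] at hy
  obtain ⟨s, ⟨hs0, hst⟩, hys⟩ := hy
  rw [mem_ball] at hys
  have d0s : dist (ρ 0) (ρ s) = s := by
    rw [hρ 0 s le_rfl hs0]; rw [abs_of_nonpos (by linarith)]; ring
  have dst : dist (ρ s) (ρ t) = t - s := by
    rw [hρ s t hs0 ht.le, abs_of_nonpos (by linarith)]; ring
  -- distance facts
  have dyt : dist y (ρ t) < t := by
    calc dist y (ρ t) ≤ dist y (ρ s) + dist (ρ s) (ρ t) := dist_triangle _ _ _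
    _ < s / 4 + (t - s) := by rw [dst]; linarith
    _ ≤ t := by linarith
  have d0y : dist (ρ 0) y ≤ 2 * β * m (ρ 0) := by
    calc dist (ρ 0) y ≤ dist (ρ 0) (ρ s) + dist (ρ s) y := dist_triangle _ _ _
    _ ≤ s + s / 4 := by rw [d0s, dist_comm]; linarith
    _ ≤ 2 * β * m (ρ 0) := by nlinarith
  -- part 2
  have hcβ2 : 1 ≤ cst (2 * β) := hcst1 _ (by linarith)
  have hmy : m (ρ 0) ≤ cst (2 * β) * m y := hC (2 * β) (by linarith) _ _ d0y
  have part2 : 2 * t ≤ (2 * β * cst (2 * β)) * m y := by nlinarith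
  -- doubling at ρ t
  have hmt : t ≤ β * cst β * m (ρ t) := by
    have h := hC β hβ0 (ρ 0) (ρ t) (by rw [hρ 0 t le_rfl ht.le, abs_of_nonpos (by linarith)]; linarith)
    nlinarith
  have hsub1 : ball (ρ t) (t / 4) ⊆ ball y (2 * t) ∩ E := by
    intro x hx
    rw [mem_ball] at hx
    constructor
    · rw [mem_ball]
      calc dist x y ≤ dist x (ρ t) + dist (ρ t) y := dist_triangle _ _ _
      _ < t / 4 + t := by rw [dist_comm (ρ t) y]; linarith
      _ ≤ 2 * t := by linarith
    · exact hRE (Set.mem_biUnion (show t ∈ Set.Icc (0:ℝ) t from ⟨ht.le, le_rfl⟩) (mem_ball.2 hx))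
  have hsub2 : ball y (2 * t) ⊆ ball (ρ t) (4 * t) := by
    intro x hx
    rw [mem_ball] at hx ⊢
    calc dist x (ρ t) ≤ dist x y + dist y (ρ t) := dist_triangle _ _ _
    _ < 2 * t + t := by linarith
    _ ≤ 4 * t := by linarith
  have hchain : γ (ball y (2 * t)) ≤ ENNReal.ofReal Aβ * γ (ball y (2 * t) ∩ E) := by
    calc γ (ball y (2 * t)) ≤ γ (ball (ρ t) (4 * t)) := measure_mono hsub2
    _ ≤ ENNReal.ofReal Aβ * γ (ball (ρ t) (t / 4)) := hAβ _ t ht hmt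
    _ ≤ ENNReal.ofReal Aβ * γ (ball y (2 * t) ∩ E) :=
        mul_le_mul_right (measure_mono hsub1) _
  have hAβ0 : (0:ℝ) < Aβ := lt_of_lt_of_le one_pos hAβ1
  have hBpos := hγ y (2 * t) (by linarith)
  have hIpos : 0 < γ (ball y (2 * t) ∩ E) :=
    lt_of_lt_of_le (hγ (ρ t) (t / 4) (by linarith)).1 (measure_mono hsub1)
  have hIfin : γ (ball y (2 * t) ∩ E) < ⊤ :=
    lt_of_le_of_lt (measure_mono Set.inter_subset_left) hBpos.2
  have part3 : ENNReal.ofReal lam * γ (ball y (2 * t)) < γ (ball y (2 * t) ∩ E) := by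
    calc ENNReal.ofReal lam * γ (ball y (2 * t))
        ≤ ENNReal.ofReal lam * (ENNReal.ofReal Aβ * γ (ball y (2 * t) ∩ E)) :=
          mul_le_mul_right hchain _
    _ = ENNReal.ofReal (lam * Aβ) * γ (ball y (2 * t) ∩ E) := by
          rw [← mul_assoc, ← ENNReal.ofReal_mul hlam0.le]
    _ < 1 * γ (ball y (2 * t) ∩ E) := by
          rw [ENNReal.mul_lt_mul_iff_left hIpos.ne' hIfin.ne]
          rw [← ENNReal.ofReal_one]
          apply ENNReal.ofReal_lt_ofReal_iff_of_nonneg (by positivity) |>.2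
          rw [lt_div_iff₀ hAβ0] at hlam
          linarith
    _ = γ (ball y (2 * t) ∩ E) := one_mul _
  exact ⟨fun x hx => ⟨y, 2 * t, by linarith, part2, hx, part3⟩, part2, part3⟩
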